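/- Let D be a serializable set of combinations and ~ a coherent equivalence relation on which D is progressive. Then the quotient structure is a well-defined DAG: the relation on equivalence classes given by [C] → [C'] whenever C →_s C' for some representatives is acyclic. -/

import Mathlib

/-- If `D` is a serializable set of combinations over a finite segment type, `r` a
coherent equivalence relation on which `D` is progressive, then the quotient structure
is a well-defined DAG: the relation on equivalence classes given by `[C] → [C']`
whenever `A →ₛ B` for some representatives `A ~ C`, `B ~ C'` is acyclic. -/
theorem quotient_dag_acyclic {σ : Type} [Fintype σ] [DecidableEq σ]
    (D : Set (Finset σ)) (step : Finset σ → σ → Finset σ → Prop)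
    (r : Finset σ → Finset σ → Prop) (hequiv : Equivalence r)
    (hstep : ∀ C s C', step C s C' → s ∉ C ∧ C' = insert s C)
    (hser : D.Nonempty ∧
      ∀ C ∈ D, C.Nonempty → ∃ s ∈ C, step (C.erase s) s C ∧ C.erase s ∈ D)
    (hcoh : ∀ C1 C2 s C1', r C1 C2 → step C1 s C1' →
      ∃ C2', step C2 s C2' ∧ r C1' C2')
    (hprog : ∀ C s C', step C s C' → ¬ r C C') :
    ∀ C : Finset σ,
      ¬ Relation.TransGen
          (fun A B => ∃ A' B' s, A' ∈ D ∧ B' ∈ D ∧ r A A' ∧ r B B' ∧ step A' s B')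
          C C := by
  set quot : Finset σ → Finset σ → Prop :=
    fun A B => ∃ A' B' s, A' ∈ D ∧ B' ∈ D ∧ r A A' ∧ r B B' ∧ step A' s B' with hquot
  -- single-step transport
  have one : ∀ A B, quot A B → ∀ A₀, r A A₀ → ∃ B₀, r B B₀ ∧ A₀.card < B₀.card := by
    rintro A B ⟨A', B', s, _, _, hAA', hBB', hst⟩ A₀ hAA₀
    obtain ⟨B₀, hst₀, hB'B₀⟩ :=
      hcoh A' A₀ s B' (hequiv.trans (hequiv.symm hAA') hAA₀) hst
    obtain ⟨hs, hins⟩ := hstep A₀ s B₀ hst₀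
    refine ⟨B₀, hequiv.trans hBB' hB'B₀, ?_⟩
    rw [hins, Finset.card_insert_of_notMem hs]
    omega
  have key : ∀ A B, Relation.TransGen quot A B →
      ∀ A₀, r A A₀ → ∃ B₀, r B B₀ ∧ A₀.card < B₀.card := by
    intro A B h
    induction h with
    | single h => exact one _ _ h
    | tail _ h ih =>
      intro A₀ hAA₀
      obtain ⟨B₀, hB, hc⟩ := ih A₀ hAA₀
      obtain ⟨C₀, hC, hc'⟩ := one _ _ h B₀ hB
      exact ⟨C₀, hC, lt_trans hc hc'⟩
  intro C hC
  -- iterate to blow past the cardinality bound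
  have grow : ∀ n : ℕ, ∃ B, r C B ∧ C.card + n ≤ B.card := by
    intro n
    induction n with
    | zero => exact ⟨C, hequiv.refl C, by omega⟩
    | succ n ih =>
      obtain ⟨B, hB, hc⟩ := ih
      obtain ⟨B', hB', hc'⟩ := key C C hC B hB
      exact ⟨B', hB', by omega⟩
  obtain ⟨B, _, hc⟩ := grow (Fintype.card σ + 1)
  have := Finset.card_le_univ B
  omega
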